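/- arXiv:1809.03493 — 2 statements merged into one kernel-verified Lean document; each statement's English description precedes it below -/
import Mathlib

section
/- Let L be a ladder-like graph on 2m vertices with m ≥ 6. Then the graph G = L − {u_1 v_1, u_4 v_4} is 3-connected. -/
open SimpleGraph

/-- `IsKRegular G k`: every vertex has exactly `k` neighbours. -/
def IsKRegular {V : Type*} (G : SimpleGraph V) (k : ℕ) : Prop :=
  ∀ v : V, (G.neighborSet v).ncard = k

/-- `IsKConnected G k`: `G` has more than `k` vertices and removing any set of
fewer than `k` vertices leaves a connected graph. -/
def IsKConnected {V : Type*} (G : SimpleGraph V) (k : ℕ) : Prop :=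
  k < Nat.card V ∧ ∀ S : Set V, S.ncard < k → (G.induce (Sᶜ : Set V)).Connected

/-- `G` contains a cycle of length `ℓ`. -/
def HasCycleOfLength {V : Type*} (G : SimpleGraph V) (ℓ : ℕ) : Prop :=
  ∃ (v : V) (c : G.Walk v v), c.IsCycle ∧ c.length = ℓ

/-- The ladder-like graph on `2m` vertices: two disjoint `m`-cycles
`u_1,...,u_m` (side `false`) and `v_1,...,v_m` (side `true`), the matching
edges `u_i v_i`, and the two extra edges `u_1 v_4` and `u_4 v_1`.
Vertex `(false, i)` is `u_{i+1}` and `(true, i)` is `v_{i+1}`. -/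
def ladderLike (m : ℕ) [NeZero m] : SimpleGraph (Bool × Fin m) where
  Adj p q :=
    (p.1 = q.1 ∧ p.2 ≠ q.2 ∧ (q.2 = p.2 + 1 ∨ p.2 = q.2 + 1)) ∨
    (p.1 ≠ q.1 ∧ (p.2 = q.2 ∨ (p.2 = 0 ∧ q.2 = 3) ∨ (p.2 = 3 ∧ q.2 = 0)))
  symm := by
    refine ⟨?_⟩
    rintro ⟨a, i⟩ ⟨b, j⟩ (⟨h1, h2, h3⟩ | ⟨h1, h2⟩)
    · exact Or.inl ⟨h1.symm, h2.symm, h3.symm⟩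
    · refine Or.inr ⟨Ne.symm h1, ?_⟩
      rcases h2 with h | ⟨h, h'⟩ | ⟨h, h'⟩
      · exact Or.inl h.symm
      · exact Or.inr (Or.inr ⟨h', h⟩)
      · exact Or.inr (Or.inl ⟨h', h⟩)
  loopless := by
    refine ⟨?_⟩
    rintro ⟨a, i⟩ (⟨-, h, -⟩ | ⟨h, -⟩) <;> exact h rfl

/-- The ladder-like graph with the edges `u_1 v_1` and `u_4 v_4` deleted. -/
def ladderLikeMinus (m : ℕ) [NeZero m] : SimpleGraph (Bool × Fin m) :=
  (ladderLike m).deleteEdges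
    {s((false, (0 : Fin m)), (true, (0 : Fin m))), s((false, (3 : Fin m)), (true, (3 : Fin m)))}

section LadderAux

variable {m : ℕ} [NeZero m]

open scoped Fin.NatCast Fin.CommRing

lemma fin_val_cast (hm : 6 ≤ m) (n : ℕ) (hn : n < m) : ((n : Fin m)).val = n := by
  rw [Fin.val_natCast, Nat.mod_eq_of_lt hn]

lemma fv0 (hm : 6 ≤ m) : ((0 : Fin m)).val = 0 := rfl
lemma fv1 (hm : 6 ≤ m) : ((1 : Fin m)).val = 1 := by
  rw [show (1 : Fin m) = ((1:ℕ) : Fin m) by norm_cast]; exact fin_val_cast hm 1 (by omega)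
lemma fv2 (hm : 6 ≤ m) : ((2 : Fin m)).val = 2 := by
  rw [show (2 : Fin m) = ((2:ℕ) : Fin m) by norm_cast]; exact fin_val_cast hm 2 (by omega)
lemma fv3 (hm : 6 ≤ m) : ((3 : Fin m)).val = 3 := by
  rw [show (3 : Fin m) = ((3:ℕ) : Fin m) by norm_cast]; exact fin_val_cast hm 3 (by omega)
lemma fv4 (hm : 6 ≤ m) : ((4 : Fin m)).val = 4 := by
  rw [show (4 : Fin m) = ((4:ℕ) : Fin m) by norm_cast]; exact fin_val_cast hm 4 (by omega)

lemma finOne_ne_zero (hm : 6 ≤ m) : (1 : Fin m) ≠ 0 :=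
  Fin.ne_of_val_ne (by rw [fv1 hm, fv0 hm]; omega)

-- step adjacency along a cycle
lemma step_adj (hm : 6 ≤ m) (b : Bool) (x : Fin m) :
    (ladderLikeMinus m).Adj (b, x) (b, x + 1) := by
  rw [ladderLikeMinus, SimpleGraph.deleteEdges_adj]
  constructor
  · refine Or.inl ⟨rfl, ?_, Or.inl rfl⟩
    intro h
    exact finOne_ne_zero hm (by linear_combination h.symm)
  · intro h
    simp only [Set.mem_insert_iff, Set.mem_singleton_iff, Sym2.eq_iff, Prod.mk.injEq] at h
    rcases h with (⟨⟨h1,-⟩,⟨h2,-⟩⟩|⟨⟨h1,-⟩,⟨h2,-⟩⟩)|(⟨⟨h1,-⟩,⟨h2,-⟩⟩|⟨⟨h1,-⟩,⟨h2,-⟩⟩) <;>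
      (subst h1; exact Bool.noConfusion h2)

-- cross edges
lemma cross_adj_mid (hm : 6 ≤ m) (b : Bool) (i : Fin m) (h0 : i ≠ 0) (h3 : i ≠ 3) :
    (ladderLikeMinus m).Adj (b, i) (!b, i) := by
  rw [ladderLikeMinus, SimpleGraph.deleteEdges_adj]
  constructor
  · exact Or.inr ⟨by cases b <;> simp, Or.inl rfl⟩
  · intro h
    simp only [Set.mem_insert_iff, Set.mem_singleton_iff, Sym2.eq_iff] at h
    rcases h with (⟨ha,-⟩|⟨-,ha⟩)|(⟨ha,-⟩|⟨-,ha⟩)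
    · exact h0 (congrArg Prod.snd ha)
    · exact h0 (congrArg Prod.snd ha)
    · exact h3 (congrArg Prod.snd ha)
    · exact h3 (congrArg Prod.snd ha)

lemma zero_ne_three (hm : 6 ≤ m) : (0 : Fin m) ≠ 3 :=
  Fin.ne_of_val_ne (by rw [fv0 hm, fv3 hm]; omega)

lemma cross_adj_03 (hm : 6 ≤ m) (b : Bool) :
    (ladderLikeMinus m).Adj (b, 0) (!b, 3) := by
  rw [ladderLikeMinus, SimpleGraph.deleteEdges_adj]
  constructor
  · exact Or.inr ⟨by cases b <;> simp, Or.inr (Or.inl ⟨rfl, rfl⟩)⟩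
  · intro h
    simp only [Set.mem_insert_iff, Set.mem_singleton_iff, Sym2.eq_iff] at h
    rcases h with (⟨-,ha⟩|⟨-,ha⟩)|(⟨ha,-⟩|⟨ha,-⟩)
    · exact zero_ne_three hm (congrArg Prod.snd ha).symm
    · exact zero_ne_three hm (congrArg Prod.snd ha).symm
    · exact zero_ne_three hm (congrArg Prod.snd ha)
    · exact zero_ne_three hm (congrArg Prod.snd ha)

lemma cross_adj_30 (hm : 6 ≤ m) (b : Bool) :
    (ladderLikeMinus m).Adj (b, 3) (!b, 0) := by
  rw [ladderLikeMinus, SimpleGraph.deleteEdges_adj]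
  constructor
  · exact Or.inr ⟨by cases b <;> simp, Or.inr (Or.inr ⟨rfl, rfl⟩)⟩
  · intro h
    simp only [Set.mem_insert_iff, Set.mem_singleton_iff, Sym2.eq_iff] at h
    rcases h with (⟨ha,-⟩|⟨ha,-⟩)|(⟨-,ha⟩|⟨-,ha⟩)
    · exact zero_ne_three hm (congrArg Prod.snd ha).symm
    · exact zero_ne_three hm (congrArg Prod.snd ha).symm
    · exact zero_ne_three hm (congrArg Prod.snd ha)
    · exact zero_ne_three hm (congrArg Prod.snd ha)

lemma arc (hm : 6 ≤ m) (S : Set (Bool × Fin m)) (b : Bool) (i : Fin m) (n : ℕ)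
    (h : ∀ t ≤ n, ((b, i + (t : Fin m)) : Bool × Fin m) ∉ S) :
    ((ladderLikeMinus m).induce Sᶜ).Reachable
      ⟨(b, i), by simpa using h 0 (Nat.zero_le n)⟩
      ⟨(b, i + (n : Fin m)), h n le_rfl⟩ := by
  induction n with
  | zero =>
    have h0 : i + ((0:ℕ) : Fin m) = i := by simp
    convert Reachable.refl _ using 2
    rw [h0]
  | succ n ih =>
    have ih' := ih (fun t ht => h t (by omega))
    refine ih'.trans (SimpleGraph.Adj.reachable ?_)
    have : i + ((n+1 : ℕ) : Fin m) = (i + (n : Fin m)) + 1 := by push_cast; ring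
    rw [SimpleGraph.comap_adj]
    simp only [Function.Embedding.coe_subtype, this]
    exact step_adj hm b _

lemma side_reach (hm : 6 ≤ m) (S : Set (Bool × Fin m)) (b : Bool) (a : Fin m)
    (hS : ∀ k : Fin m, ((b, k) : Bool × Fin m) ∈ S → k = a)
    (i j : Fin m) (hi : ((b, i) : Bool × Fin m) ∉ S) (hj : ((b, j) : Bool × Fin m) ∉ S) :
    ((ladderLikeMinus m).induce Sᶜ).Reachable ⟨(b, i), hi⟩ ⟨(b, j), hj⟩ := by
  obtain ⟨n, hn, rfl⟩ : ∃ n : ℕ, n < m ∧ j = i + (n : Fin m) :=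
    ⟨(j - i).val, (j - i).isLt, by rw [Fin.cast_val_eq_self]; ring⟩
  by_cases hfwd : ∀ t ≤ n, ((b, i + (t : Fin m)) : Bool × Fin m) ∉ S
  · exact arc hm S b i n hfwd
  · push_neg at hfwd
    obtain ⟨t, htn, htS⟩ := hfwd
    have hta : i + (t : Fin m) = a := hS _ htS
    -- facts about t
    have ht0 : t ≠ 0 := by
      rintro rfl; exact hi (by simpa using htS)
    have htn' : t ≠ n := by
      rintro rfl; exact hj htS
    have harcH : ∀ s ≤ m - n, ((b, (i + (n : Fin m)) + (s : Fin m)) : Bool × Fin m) ∉ S := by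
      intro s hs hmem
      have he : i + (n : Fin m) + (s : Fin m) = i + (t : Fin m) := by
        rw [hS _ hmem, hta]
      have he2 : (((n + s : ℕ)) : Fin m) = ((t : ℕ) : Fin m) := by
        push_cast
        linear_combination he
      have he3 : (n + s) % m = t % m := by
        have := congrArg Fin.val he2
        rwa [Fin.val_natCast, Fin.val_natCast] at this
      have h1 : t % m = t := Nat.mod_eq_of_lt (by omega)
      rcases Nat.lt_or_ge (n + s) m with hlt | hge
      · rw [Nat.mod_eq_of_lt hlt] at he3; omega
      · have : n + s = m := by omega
        rw [this, Nat.mod_self] at he3; omega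
    have key : (i + (n : Fin m)) + (((m - n : ℕ)) : Fin m) = i := by
      rw [add_assoc, ← Nat.cast_add, Nat.add_sub_cancel' (le_of_lt hn)]
      simp
    have h2 := arc hm S b (i + (n : Fin m)) (m - n) harcH
    refine Reachable.symm ?_
    convert h2 using 2
    rw [key]

lemma reach_to_free (hm : 6 ≤ m) (S : Set (Bool × Fin m)) (g : Bool)
    (hfree : ∀ k : Fin m, ((g, k) : Bool × Fin m) ∉ S)
    (x : Bool × Fin m) (hx : x ∉ S) :
    ∃ k : Fin m, ((ladderLikeMinus m).induce Sᶜ).Reachable ⟨x, hx⟩ ⟨(g, k), hfree k⟩ := by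
  obtain ⟨bx, ix⟩ := x
  by_cases hbg : bx = g
  · subst hbg; exact ⟨ix, Reachable.refl _⟩
  · have hg : g = !bx := by cases bx <;> cases g <;> simp_all
    subst hg
    by_cases h0 : ix = 0
    · subst h0
      refine ⟨3, SimpleGraph.Adj.reachable ?_⟩
      rw [SimpleGraph.comap_adj]
      simp only [Function.Embedding.coe_subtype]
      exact cross_adj_03 hm bx
    · by_cases h3 : ix = 3
      · subst h3
        refine ⟨0, SimpleGraph.Adj.reachable ?_⟩
        rw [SimpleGraph.comap_adj]
        simp only [Function.Embedding.coe_subtype]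
        exact cross_adj_30 hm bx
      · refine ⟨ix, SimpleGraph.Adj.reachable ?_⟩
        rw [SimpleGraph.comap_adj]
        simp only [Function.Embedding.coe_subtype]
        exact cross_adj_mid hm bx ix h0 h3

lemma precon_of_free_side (hm : 6 ≤ m) (S : Set (Bool × Fin m)) (g : Bool)
    (hfree : ∀ k : Fin m, ((g, k) : Bool × Fin m) ∉ S) :
    ((ladderLikeMinus m).induce Sᶜ).Preconnected := by
  rintro ⟨x, hx⟩ ⟨y, hy⟩
  obtain ⟨kx, hrx⟩ := reach_to_free hm S g hfree x hx
  obtain ⟨ky, hry⟩ := reach_to_free hm S g hfree y hy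
  have hmid := side_reach hm S g 0 (fun k hk => absurd hk (hfree k)) kx ky (hfree kx) (hfree ky)
  exact (hrx.trans hmid).trans hry.symm

lemma pick_w (hm : 6 ≤ m) (a c : Fin m) : ∃ w : Fin m, w ≠ 0 ∧ w ≠ 3 ∧ w ≠ a ∧ w ≠ c := by
  have v0 := fv0 (m := m) hm
  have v3 := fv3 (m := m) hm
  have hex : ∃ t : ℕ, t < m ∧ t ≠ 0 ∧ t ≠ 3 ∧ t ≠ a.val ∧ t ≠ c.val := by
    by_cases h1 : a.val = 1 <;> by_cases h2 : c.val = 1 <;>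
    by_cases h3 : a.val = 2 <;> by_cases h4 : c.val = 2 <;>
      first
        | exact ⟨1, by omega, by omega, by omega, by omega, by omega⟩
        | exact ⟨2, by omega, by omega, by omega, by omega, by omega⟩
        | exact ⟨4, by omega, by omega, by omega, by omega, by omega⟩
  obtain ⟨t, htm, ht0, ht3, hta, htc⟩ := hex
  refine ⟨⟨t, htm⟩, ?_, ?_, Fin.ne_of_val_ne hta, Fin.ne_of_val_ne htc⟩
  · intro h; rw [Fin.ext_iff, v0] at h; exact ht0 h
  · intro h; rw [Fin.ext_iff, v3] at h; exact ht3 h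

lemma precon_both_small (hm : 6 ≤ m) (S : Set (Bool × Fin m)) (a c : Fin m)
    (ha : ∀ k : Fin m, ((false, k) : Bool × Fin m) ∈ S → k = a)
    (hc : ∀ k : Fin m, ((true, k) : Bool × Fin m) ∈ S → k = c) :
    ((ladderLikeMinus m).induce Sᶜ).Preconnected := by
  obtain ⟨w, hw0, hw3, hwa, hwc⟩ := pick_w hm a c
  have hwfS : ((false, w) : Bool × Fin m) ∉ S := fun h => hwa (ha w h)
  have hwtS : ((true, w) : Bool × Fin m) ∉ S := fun h => hwc (hc w h)
  have hcross : ((ladderLikeMinus m).induce Sᶜ).Reachable ⟨(false, w), hwfS⟩ ⟨(true, w), hwtS⟩ := by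
    refine SimpleGraph.Adj.reachable ?_
    rw [SimpleGraph.comap_adj]
    simp only [Function.Embedding.coe_subtype]
    exact cross_adj_mid hm false w hw0 hw3
  have hub : ∀ (bz : Bool) (iz : Fin m) (hz : ((bz, iz) : Bool × Fin m) ∉ S),
      ((ladderLikeMinus m).induce Sᶜ).Reachable ⟨(bz, iz), hz⟩ ⟨(true, w), hwtS⟩ := by
    intro bz iz hz
    cases bz
    · exact (side_reach hm S false a ha iz w hz hwfS).trans hcross
    · exact side_reach hm S true c hc iz w hz hwtS
  rintro ⟨⟨bx, ix⟩, hx⟩ ⟨⟨by', iy⟩, hy⟩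
  exact (hub bx ix hx).trans (hub by' iy hy).symm

lemma two_in_side (S : Set (Bool × Fin m)) (hS : S.ncard ≤ 2) (g : Bool) (k1 k2 : Fin m)
    (hk1 : ((g, k1) : Bool × Fin m) ∈ S) (hk2 : ((g, k2) : Bool × Fin m) ∈ S) (hne : k2 ≠ k1) :
    ∀ k : Fin m, ((!g, k) : Bool × Fin m) ∉ S := by
  intro k hk
  have hsub : ({((g, k1) : Bool × Fin m), (g, k2), (!g, k)} : Set _) ⊆ S := by
    intro p hp
    rcases hp with rfl | rfl | rfl
    · exact hk1
    · exact hk2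
    · exact hk
  have hcard : ({((g, k1) : Bool × Fin m), (g, k2), (!g, k)} : Set _).ncard = 3 := by
    rw [Set.ncard_insert_of_notMem, Set.ncard_insert_of_notMem, Set.ncard_singleton]
    · rintro h
      rw [Set.mem_singleton_iff] at h
      have := congrArg Prod.fst h
      simp at this
    · rintro (h | h)
      · exact hne (congrArg Prod.snd h).symm
      · have := congrArg Prod.fst h
        simp at this
  have := Set.ncard_le_ncard hsub (Set.toFinite S)
  omega

theorem ladderLikeMinus_threeConnected_aux (m : ℕ) [NeZero m] (hm : 6 ≤ m) :
    3 < Nat.card (Bool × Fin m) ∧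
      ∀ S : Set (Bool × Fin m), S.ncard < 3 → ((ladderLikeMinus m).induce (Sᶜ : Set _)).Connected := by
  constructor
  · rw [Nat.card_eq_fintype_card, Fintype.card_prod, Fintype.card_bool, Fintype.card_fin]
    omega
  · intro S hS
    rw [SimpleGraph.connected_iff]
    have hSle : S.ncard ≤ 2 := by omega
    constructor
    · by_cases hf : ∃ a : Fin m, ∀ k : Fin m, ((false, k) : Bool × Fin m) ∈ S → k = a
      · by_cases ht : ∃ c : Fin m, ∀ k : Fin m, ((true, k) : Bool × Fin m) ∈ S → k = c
        · obtain ⟨a, ha⟩ := hf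
          obtain ⟨c, hc⟩ := ht
          exact precon_both_small hm S a c ha hc
        · push_neg at ht
          obtain ⟨k1, hk1, -⟩ := ht 0
          obtain ⟨k2, hk2, hk21⟩ := ht k1
          exact precon_of_free_side hm S false (two_in_side S hSle true k1 k2 hk1 hk2 hk21)
      · push_neg at hf
        obtain ⟨k1, hk1, -⟩ := hf 0
        obtain ⟨k2, hk2, hk21⟩ := hf k1
        exact precon_of_free_side hm S true (two_in_side S hSle false k1 k2 hk1 hk2 hk21)
    · by_contra hne
      rw [not_nonempty_iff] at hne
      have huniv : S = Set.univ := by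
        ext p
        simp only [Set.mem_univ, iff_true]
        by_contra hp
        exact hne.false ⟨p, hp⟩
      rw [huniv, Set.ncard_univ, Nat.card_eq_fintype_card, Fintype.card_prod,
        Fintype.card_bool, Fintype.card_fin] at hS
      omega


end LadderAux

theorem ladderLikeMinus_threeConnected (m : ℕ) [NeZero m] (hm : 6 ≤ m) :
    IsKConnected (ladderLikeMinus m) 3 := by
  exact ladderLikeMinus_threeConnected_aux m hm
end

section
/- For every n ≥ 4, there exists a Hamiltonian cycle C in the augmented cube AQ_n such that AQ_n − E(C) is a spanning (2n−3)-regular and (2n−3)-connected subgraph of AQ_n. -/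
open SimpleGraph

/-- The `n`-dimensional augmented cube: vertices are binary strings of length `n`;
two strings are adjacent iff (unwinding the recursive definition) they agree on
a prefix, and then either differ in exactly one coordinate or are bitwise
complementary on the whole remaining suffix. -/
def AQ (n : ℕ) : SimpleGraph (Fin n → Bool) where
  Adj x y := ∃ i : Fin n, (∀ j, j < i → x j = y j) ∧
    ((x i ≠ y i ∧ ∀ j, i < j → x j = y j) ∨ (∀ j, i ≤ j → x j ≠ y j))
  symm := by
    constructor
    rintro x y ⟨i, h1, h2⟩
    refine ⟨i, fun j hj => (h1 j hj).symm, ?_⟩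
    rcases h2 with ⟨ha, hb⟩ | h
    · exact Or.inl ⟨Ne.symm ha, fun j hj => (hb j hj).symm⟩
    · exact Or.inr fun j hj => Ne.symm (h j hj)
  loopless := by
    constructor
    rintro x ⟨i, -, ⟨ha, -⟩ | h⟩
    · exact ha rfl
    · exact h i le_rfl rfl


namespace AQaux
abbrev V (n : ℕ) := Fin n → Bool

lemma bool_eq_not {a b : Bool} (h : a ≠ b) : b = !a := by revert h; cases a <;> cases b <;> decide
lemma bool_ne_not (a : Bool) : a ≠ !a := by cases a <;> decide

variable {n : ℕ}

def flip (u : V n) (i : Fin n) : V n := Function.update u i (!u i)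
def flipFrom (u : V n) (i : Fin n) : V n := fun j => if i ≤ j then !u j else u j

lemma flip_apply_self (u : V n) (i : Fin n) : flip u i i = !u i := Function.update_self _ _ _
lemma flip_apply_of_ne (u : V n) {i j : Fin n} (h : j ≠ i) : flip u i j = u j :=
  Function.update_of_ne h _ _
lemma flipFrom_apply_of_le (u : V n) {i j : Fin n} (h : i ≤ j) : flipFrom u i j = !u j := if_pos h
lemma flipFrom_apply_of_lt (u : V n) {i j : Fin n} (h : j < i) : flipFrom u i j = u j :=
  if_neg (not_le.mpr h)

lemma adj_flip (u : V n) (i : Fin n) : (AQ n).Adj u (flip u i) := by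
  refine ⟨i, fun j hj => (flip_apply_of_ne u (ne_of_lt hj)).symm, Or.inl ⟨?_, ?_⟩⟩
  · rw [flip_apply_self]; exact bool_ne_not _
  · exact fun j hj => (flip_apply_of_ne u (ne_of_gt hj)).symm

lemma adj_flipFrom (u : V n) (i : Fin n) : (AQ n).Adj u (flipFrom u i) := by
  refine ⟨i, fun j hj => (flipFrom_apply_of_lt u hj).symm, Or.inr fun j hj => ?_⟩
  rw [flipFrom_apply_of_le u hj]; exact bool_ne_not _

lemma adj_cases {u y : V n} (h : (AQ n).Adj u y) : ∃ i, y = flip u i ∨ y = flipFrom u i := by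
  obtain ⟨i, h1, h2⟩ := h
  rcases h2 with ⟨ha, hb⟩ | hall
  · refine ⟨i, Or.inl (funext fun j => ?_)⟩
    rcases lt_trichotomy j i with hj | rfl | hj
    · rw [flip_apply_of_ne u (ne_of_lt hj)]; exact (h1 j hj).symm
    · rw [flip_apply_self]; exact bool_eq_not ha
    · rw [flip_apply_of_ne u (ne_of_gt hj)]; exact (hb j hj).symm
  · refine ⟨i, Or.inr (funext fun j => ?_)⟩
    rcases lt_or_ge j i with hj | hj
    · rw [flipFrom_apply_of_lt u hj]; exact (h1 j hj).symm
    · rw [flipFrom_apply_of_le u hj]; exact bool_eq_not (hall j hj)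

lemma flipFrom_last {m : ℕ} (u : V (m+1)) : flipFrom u (Fin.last m) = flip u (Fin.last m) := by
  funext j
  rcases eq_or_ne j (Fin.last m) with rfl | hj
  · rw [flipFrom_apply_of_le u le_rfl, flip_apply_self]
  · rw [flipFrom_apply_of_lt u (lt_of_le_of_ne (Fin.le_last j) hj), flip_apply_of_ne u hj]

def nbrFun {m : ℕ} (u : V (m+1)) : (Fin (m+1) ⊕ Fin m) → V (m+1) :=
  Sum.elim (flip u) (fun i => flipFrom u i.castSucc)

lemma flip_inj {u : V n} {i i' : Fin n} (h : flip u i = flip u i') : i = i' := by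
  by_contra hne
  have h1 := congrFun h i
  rw [flip_apply_self, flip_apply_of_ne u hne] at h1
  exact bool_ne_not _ h1.symm

lemma nbrFun_inj {m : ℕ} (u : V (m+1)) : Function.Injective (nbrFun u) := by
  have mixed : ∀ (i : Fin (m+1)) (j : Fin m), flip u i ≠ flipFrom u j.castSucc := by
    intro i j heq
    have hlast := congrFun heq (Fin.last m)
    rw [flipFrom_apply_of_le u (Fin.le_last _)] at hlast
    have hi : i = Fin.last m := by
      by_contra hne
      rw [flip_apply_of_ne u (Ne.symm hne)] at hlast
      exact bool_ne_not _ hlast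
    subst hi
    have hj := congrFun heq j.castSucc
    rw [flipFrom_apply_of_le u le_rfl,
      flip_apply_of_ne u (ne_of_lt (Fin.castSucc_lt_last j))] at hj
    exact bool_ne_not _ hj
  have ffinj : ∀ {j j' : Fin m}, flipFrom u j.castSucc = flipFrom u j'.castSucc → j = j' := by
    intro j j' heq
    by_contra hne
    rcases lt_or_gt_of_ne hne with hlt | hlt
    · have := congrFun heq j.castSucc
      rw [flipFrom_apply_of_le u le_rfl,
        flipFrom_apply_of_lt u (by exact_mod_cast Fin.castSucc_lt_castSucc_iff.mpr hlt)] at this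
      exact bool_ne_not _ this.symm
    · have := congrFun heq j'.castSucc
      rw [flipFrom_apply_of_le u le_rfl,
        flipFrom_apply_of_lt u (by exact_mod_cast Fin.castSucc_lt_castSucc_iff.mpr hlt)] at this
      exact bool_ne_not _ this
  rintro (i | i) (i' | i') h
  · exact congrArg Sum.inl (flip_inj h)
  · exact absurd h (mixed _ _)
  · exact absurd h.symm (mixed _ _)
  · exact congrArg Sum.inr (ffinj h)

lemma neighborSet_eq {m : ℕ} (u : V (m+1)) :
    (AQ (m+1)).neighborSet u = Set.range (nbrFun u) := by
  ext y
  simp only [mem_neighborSet, Set.mem_range]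
  constructor
  · intro h
    obtain ⟨i, hi | hi⟩ := adj_cases h
    · exact ⟨Sum.inl i, hi.symm⟩
    · rcases eq_or_ne i (Fin.last m) with rfl | hne
      · exact ⟨Sum.inl (Fin.last m), by simp only [nbrFun, Sum.elim_inl]; rw [← flipFrom_last, hi]⟩
      · have hlt : (i : ℕ) < m := by
          rcases lt_or_eq_of_le (Nat.lt_succ_iff.mp i.isLt) with h' | h'
          · exact h'
          · exact absurd (Fin.ext h') hne
        refine ⟨Sum.inr ⟨i, hlt⟩, ?_⟩
        have : (⟨(i : ℕ), hlt⟩ : Fin m).castSucc = i := Fin.ext rfl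
        rw [nbrFun, Sum.elim_inr, this, hi]
  · rintro ⟨(i | i), rfl⟩
    · exact adj_flip u i
    · exact adj_flipFrom u _

lemma ncard_neighborSet {m : ℕ} (u : V (m+1)) :
    ((AQ (m+1)).neighborSet u).ncard = 2 * m + 1 := by
  rw [neighborSet_eq u, ← Set.image_univ, ← Finset.coe_univ, ← Finset.coe_image,
    Set.ncard_coe_finset, Finset.card_image_of_injective _ (nbrFun_inj u)]
  simp [Finset.card_univ]
  ring


section CycleTwo
variable {W : Type*} {G : SimpleGraph W} [DecidableEq W]

lemma path_cons_edges_at_head {a x t : W} (h : G.Adj a x) (q : G.Walk x t)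
    (hp : (SimpleGraph.Walk.cons h q).IsPath) (w : W) :
    s(a, w) ∈ (SimpleGraph.Walk.cons h q).edges ↔ w = x := by
  rw [SimpleGraph.Walk.edges_cons, List.mem_cons]
  constructor
  · rintro (heq | hmem)
    · rw [Sym2.eq_iff] at heq
      rcases heq with ⟨-, rfl⟩ | ⟨rfl, rfl⟩
      · rfl
      · exact absurd rfl (G.ne_of_adj h)
    · exfalso
      rw [SimpleGraph.Walk.cons_isPath_iff] at hp
      exact hp.2 (q.fst_mem_support_of_mem_edges hmem)
  · rintro rfl; exact Or.inl rfl

/-- A Hamiltonian cycle has exactly two (distinct) edges at every vertex. -/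
lemma ham_cycle_two_edges {v : W} {c : G.Walk v v} (hc : c.IsHamiltonianCycle) (u : W) :
    ∃ w₁ w₂ : W, w₁ ≠ w₂ ∧ G.Adj u w₁ ∧ G.Adj u w₂ ∧
      ∀ w, s(u, w) ∈ c.edges ↔ w = w₁ ∨ w = w₂ := by
  classical
  have hu : u ∈ c.support := hc.mem_support u
  have hde : ∀ e, e ∈ (c.rotate u hu).edges ↔ e ∈ c.edges := fun e => (c.rotate_edges u hu).mem_iff
  have hdc : (c.rotate u hu).IsCycle := hc.isCycle.rotate hu
  cases hdn : c.rotate u hu with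
  | nil => exact absurd hdn hdc.ne_nil
  | @cons _ x _ h q =>
    rw [hdn, SimpleGraph.Walk.cons_isCycle_iff] at hdc
    obtain ⟨hq_path, hq_ne⟩ := hdc
    have hqr : q.reverse.IsPath := hq_path.reverse
    cases hqr' : q.reverse with
    | nil => exact absurd rfl (G.ne_of_adj h)
    | @cons _ y _ h' q' =>
      rw [hqr'] at hqr
      refine ⟨x, y, ?_, h, h', ?_⟩
      · rintro rfl
        apply hq_ne
        have : s(u, x) ∈ q.reverse.edges := by rw [hqr']; simp
        rwa [SimpleGraph.Walk.edges_reverse, List.mem_reverse] at this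
      · intro w
        have hmemq : s(u, w) ∈ q.edges ↔ w = y := by
          rw [← List.mem_reverse, ← SimpleGraph.Walk.edges_reverse, hqr',
            path_cons_edges_at_head h' q' hqr w]
        rw [← hde, hdn, SimpleGraph.Walk.edges_cons, List.mem_cons, hmemq]
        constructor
        · rintro (heq | rfl)
          · rw [Sym2.eq_iff] at heq
            rcases heq with ⟨-, rfl⟩ | ⟨rfl, rfl⟩
            · exact Or.inl rfl
            · exact absurd rfl (G.ne_of_adj h)
          · exact Or.inr rfl
        · rintro (rfl | rfl)
          · exact Or.inl rfl
          · exact Or.inr rfl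
end CycleTwo

def cns (b : Bool) (x : V n) : V (n+1) := Fin.cons b x
def cmpl (x : V n) : V n := fun j => !x j

@[simp] lemma cns_zero (b : Bool) (x : V n) : cns b x 0 = b := rfl
@[simp] lemma cns_succ (b : Bool) (x : V n) (k : Fin n) : cns b x k.succ = x k := by
  simp [cns]

lemma cns_inj (b : Bool) : Function.Injective (cns b : V n → V (n+1)) := by
  intro x y h
  funext k
  have := congrFun h k.succ
  simpa using this

lemma cns_ne (b b' : Bool) (hbb : b ≠ b') (x y : V n) : cns b x ≠ cns b' y := by
  intro h
  exact hbb (by simpa using congrFun h 0)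

lemma eq_cns (z : V (n+1)) : z = cns (z 0) (Fin.tail z) := (Fin.cons_self_tail z).symm

lemma cmpl_ne (x : V (n+1)) : cmpl x ≠ x := by
  intro h
  exact bool_ne_not (x 0) ((congrFun h 0).symm)

lemma cmpl_inj : Function.Injective (cmpl : V n → V n) := by
  intro x y h
  funext k
  have := congrFun h k
  simp only [cmpl] at this
  exact Bool.not_inj this

@[simp] lemma cmpl_cmpl (x : V n) : cmpl (cmpl x) = x := by
  funext k; simp [cmpl]

lemma adj_lift {b : Bool} {x y : V n} (h : (AQ n).Adj x y) :
    (AQ (n+1)).Adj (cns b x) (cns b y) := by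
  obtain ⟨i, h1, h2⟩ := h
  refine ⟨i.succ, ?_, ?_⟩
  · intro j hj
    induction j using Fin.cases with
    | zero => rfl
    | succ k => simpa using h1 k (by simpa using hj)
  · rcases h2 with ⟨ha, hb⟩ | hall
    · refine Or.inl ⟨by simpa using ha, ?_⟩
      intro j hj
      induction j using Fin.cases with
      | zero => exact absurd hj (by simp [Fin.lt_def])
      | succ k => simpa using hb k (by simpa using hj)
    · refine Or.inr ?_
      intro j hj
      induction j using Fin.cases with
      | zero => exact absurd hj (by simp [Fin.le_def])
      | succ k => simpa using hall k (by simpa using hj)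

lemma adj_e0 {b b' : Bool} (hbb : b ≠ b') (x : V n) :
    (AQ (n+1)).Adj (cns b x) (cns b' x) := by
  refine ⟨0, ?_, Or.inl ⟨by simpa using hbb, ?_⟩⟩
  · intro j hj
    exact absurd hj (by simp [Fin.lt_def])
  · intro j hj
    induction j using Fin.cases with
    | zero => exact absurd hj (lt_irrefl _)
    | succ k => simp

lemma adj_cmpl {b b' : Bool} (hbb : b ≠ b') (x : V n) :
    (AQ (n+1)).Adj (cns b x) (cns b' (cmpl x)) := by
  refine ⟨0, ?_, Or.inr ?_⟩
  · intro j hj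
    exact absurd hj (by simp [Fin.lt_def])
  · intro j _
    induction j using Fin.cases with
    | zero => simpa using hbb
    | succ k => simpa [cmpl] using bool_ne_not (x k)

def liftHom (b : Bool) : AQ n →g AQ (n+1) where
  toFun := cns b
  map_rel' := adj_lift

@[simp] lemma liftHom_apply (b : Bool) (x : V n) : liftHom b x = cns b x := rfl
lemma liftHom_coe (b : Bool) : ⇑(liftHom b : AQ n →g AQ (n+1)) = cns b := rfl

section BFS
variable {U : Type*} [Fintype U] [DecidableEq U] (G : SimpleGraph U) [DecidableRel G.Adj]

def bstep (P : Finset U) (A : Finset U) : Finset U :=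
  A ∪ P.filter (fun w => ∃ a ∈ A, G.Adj a w)

def bclos (P : Finset U) (k : ℕ) (u : U) : Finset U := (bstep G P)^[k] {u}

lemma bfs_sound (P : Finset U) (u : U) (hu : u ∈ (P : Set U)) (k : ℕ) :
    ∀ a ∈ bclos G P k u, ∃ ha : a ∈ (P : Set U),
      (G.induce (P : Set U)).Reachable ⟨u, hu⟩ ⟨a, ha⟩ := by
  induction k with
  | zero =>
    intro a ha
    simp only [bclos, Function.iterate_zero, id_eq, Finset.mem_singleton] at ha
    subst ha
    exact ⟨hu, Reachable.refl _⟩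
  | succ k ih =>
    intro a ha
    rw [bclos, Function.iterate_succ_apply'] at ha
    rw [bstep, Finset.mem_union] at ha
    rcases ha with ha | ha
    · exact ih a ha
    · rw [Finset.mem_filter] at ha
      obtain ⟨haP, b, hb, hadj⟩ := ha
      obtain ⟨hbP, hreach⟩ := ih b hb
      exact ⟨Finset.mem_coe.mpr haP, hreach.trans (Adj.reachable hadj)⟩

lemma bfs_connected (P : Finset U) (u : U) (hu : u ∈ P) (k : ℕ)
    (hall : ∀ v ∈ P, v ∈ bclos G P k u) : (G.induce (P : Set U)).Connected := by
  have hu' : u ∈ (P : Set U) := Finset.mem_coe.mpr hu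
  rw [connected_iff]
  refine ⟨?_, ⟨⟨u, hu'⟩⟩⟩
  intro a b
  obtain ⟨ha, hra⟩ := bfs_sound G P u hu' k a.1 (hall a.1 (Finset.mem_coe.mp a.2))
  obtain ⟨hb, hrb⟩ := bfs_sound G P u hu' k b.1 (hall b.1 (Finset.mem_coe.mp b.2))
  have ea : (⟨a.1, ha⟩ : ↥(P : Set U)) = a := Subtype.ext rfl
  have eb : (⟨b.1, hb⟩ : ↥(P : Set U)) = b := Subtype.ext rfl
  rw [ea] at hra; rw [eb] at hrb
  exact hra.symm.trans hrb
end BFS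

section Misc
variable {U : Type*}

lemma exists_not_mem [Fintype U] (X : Set U) (h : X.ncard < Nat.card U) : ∃ z, z ∉ X := by
  by_contra h'
  push_neg at h'
  have : X = Set.univ := Set.eq_univ_iff_forall.mpr h'
  rw [this, Set.ncard_univ] at h
  exact lt_irrefl _ h

def inclHom (G : SimpleGraph U) {A B : Set U} (h : A ⊆ B) : G.induce A →g G.induce B where
  toFun := fun a => ⟨a.1, h a.2⟩
  map_rel' := fun had => had

lemma subset_pair_of_ncard_lt_three (S : Set U) (hS : S.ncard < 3) (hfin : S.Finite)
    (t : U) (ht : t ∉ S) :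
    ∃ a b, S ⊆ {a, b} ∧ a ∈ S ∪ {t} ∧ b ∈ S ∪ {t} := by
  rcases Set.eq_empty_or_nonempty S with rfl | ⟨x, hx⟩
  · exact ⟨t, t, by simp, by simp, by simp⟩
  by_cases hSx : S ⊆ {x}
  · exact ⟨x, t, hSx.trans (by simp), Or.inl hx, Or.inr rfl⟩
  · obtain ⟨y, hy, hyx⟩ := Set.not_subset.mp hSx
    rw [Set.mem_singleton_iff] at hyx
    refine ⟨x, y, ?_, Or.inl hx, Or.inl hy⟩
    intro z hz
    by_contra hzxy
    simp only [Set.mem_insert_iff, Set.mem_singleton_iff, not_or] at hzxy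
    have h3 : ({z, x, y} : Set U).ncard = 3 := by
      rw [Set.ncard_insert_of_notMem (by simp [hzxy.1, hzxy.2]) (Set.toFinite _),
        Set.ncard_pair (by intro h; exact hyx h.symm)]
    have hsub : ({z, x, y} : Set U) ⊆ S := by
      rintro w (rfl | rfl | rfl) <;> assumption
    have := Set.ncard_le_ncard hsub hfin
    omega

lemma pair_conn_imp [Fintype U] [DecidableEq U] (G : SimpleGraph U) (hcard : 5 ≤ Nat.card U)
    (hpair : ∀ a b : U, (G.induce ({a, b}ᶜ : Set U)).Connected) :
    ∀ S : Set U, S.ncard < 3 → (G.induce (Sᶜ : Set U)).Connected := by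
  intro S hS
  rw [connected_iff]
  constructor
  · intro zu zw
    have hY : (S ∪ {zu.1, zw.1} : Set U).ncard < Nat.card U := by
      have h1 : (S ∪ {zu.1, zw.1} : Set U).ncard ≤ S.ncard + ({zu.1, zw.1} : Set U).ncard :=
        Set.ncard_union_le _ _
      have h2 : ({zu.1, zw.1} : Set U).ncard ≤ 2 := by simpa using Set.ncard_insert_le zu.1 {zw.1}
      omega
    obtain ⟨t, ht⟩ := exists_not_mem _ hY
    have htS : t ∉ S := fun h => ht (Or.inl h)
    obtain ⟨a, b, hsub, haS, hbS⟩ := subset_pair_of_ncard_lt_three S hS (Set.toFinite _) t htS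
    have hzu' : zu.1 ∈ ({a, b}ᶜ : Set U) := by
      rintro (rfl | rfl)
      · rcases haS with h | h
        · exact zu.2 h
        · exact ht (Or.inr (Or.inl (by rw [Set.mem_singleton_iff] at h; subst h; simp)))
      · rcases hbS with h | h
        · exact zu.2 h
        · exact ht (Or.inr (Or.inl (by rw [Set.mem_singleton_iff] at h; subst h; simp)))
    have hzw' : zw.1 ∈ ({a, b}ᶜ : Set U) := by
      rintro (rfl | rfl)
      · rcases haS with h | h
        · exact zw.2 h
        · exact ht (Or.inr (Or.inr (by rw [Set.mem_singleton_iff] at h; subst h; simp)))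
      · rcases hbS with h | h
        · exact zw.2 h
        · exact ht (Or.inr (Or.inr (by rw [Set.mem_singleton_iff] at h; subst h; simp)))
    have hcsub : ({a, b}ᶜ : Set U) ⊆ (Sᶜ : Set U) := Set.compl_subset_compl.mpr hsub
    have hr := (hpair a b).preconnected ⟨zu.1, hzu'⟩ ⟨zw.1, hzw'⟩
    have := hr.map (inclHom G hcsub)
    have e1 : (inclHom G hcsub) ⟨zu.1, hzu'⟩ = zu := Subtype.ext rfl
    have e2 : (inclHom G hcsub) ⟨zw.1, hzw'⟩ = zw := Subtype.ext rfl
    rwa [e1, e2] at this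
  · have : (S : Set U).ncard < Nat.card U := by omega
    obtain ⟨z, hz⟩ := exists_not_mem _ this
    exact ⟨⟨z, hz⟩⟩
end Misc

lemma cmpl_ne' {n : ℕ} (x : V n) (h : 1 ≤ n) : cmpl x ≠ x := by
  intro heq
  exact bool_ne_not (x ⟨0, h⟩) (congrFun heq ⟨0, h⟩).symm

lemma cns_eq_tail {n : ℕ} {β β' : Bool} {x y : V n} (h : cns β x = cns β' y) : x = y := by
  funext k
  have := congrFun h k.succ
  simpa using this

lemma cns_eq_bit {n : ℕ} {β β' : Bool} {x y : V n} (h : cns β x = cns β' y) : β = β' := by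
  have := congrFun h 0
  simpa using this

lemma regular_of_ham {m : ℕ} {v : V (m+1)} {c : (AQ (m+1)).Walk v v}
    (hc : c.IsHamiltonianCycle) :
    ∀ u, (((AQ (m+1)).deleteEdges {e | e ∈ c.edges}).neighborSet u).ncard = 2 * m - 1 := by
  intro u
  obtain ⟨w₁, w₂, hne, ha1, ha2, hiff⟩ := ham_cycle_two_edges hc u
  have hset : (((AQ (m+1)).deleteEdges {e | e ∈ c.edges}).neighborSet u)
      = (AQ (m+1)).neighborSet u \ {w₁, w₂} := by
    ext w
    simp only [mem_neighborSet, deleteEdges_adj, Set.mem_setOf_eq, Set.mem_diff,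
      Set.mem_insert_iff, Set.mem_singleton_iff, hiff w]
  rw [hset, Set.ncard_diff (by
      rintro w (rfl | rfl)
      · exact ha1
      · exact ha2) (Set.toFinite _), ncard_neighborSet, Set.ncard_pair hne]
  omega

lemma card_V (n : ℕ) : Nat.card (V n) = 2^n := by
  rw [Nat.card_eq_fintype_card]
  simp [Fintype.card_fun]

instance AQdec {n : ℕ} : DecidableRel (AQ n).Adj := fun x y =>
  inferInstanceAs (Decidable (∃ i : Fin n, (∀ j, j < i → x j = y j) ∧
    ((x i ≠ y i ∧ ∀ j, i < j → x j = y j) ∨ (∀ j, i ≤ j → x j ≠ y j))))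

-- base cycle vertices
def g3 (k : ℕ) : V 3 := ![decide (k % 8 ≥ 4), decide (k % 4 ≥ 2), decide (k % 2 = 1)]

def v3 : V 3 := g3 0

lemma adj3 (k : ℕ) (h : (AQ 3).Adj (g3 k) (g3 (k+1)) = True) : (AQ 3).Adj (g3 k) (g3 (k+1)) :=
  of_eq_true h

def c3 : (AQ 3).Walk v3 v3 :=
  .cons (adj3 0 (by decide)) <| .cons (adj3 1 (by decide)) <| .cons (adj3 2 (by decide)) <|
  .cons (adj3 3 (by decide)) <| .cons (adj3 4 (by decide)) <| .cons (adj3 5 (by decide)) <|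
  .cons (adj3 6 (by decide)) <| (of_eq_true (by decide) :
    (AQ 3).Adj (g3 7) v3).toWalk

set_option maxRecDepth 4000 in
lemma c3_ham : c3.IsHamiltonianCycle := by
  rw [SimpleGraph.Walk.isHamiltonianCycle_iff_isCycle_and_support_count_tail_eq_one]
  constructor
  · rw [SimpleGraph.Walk.isCycle_def]
    refine ⟨⟨?_⟩, ?_, ?_⟩
    · decide
    · simp [c3]
      exact SimpleGraph.Walk.not_nil_cons
    · decide
  · decide

def H3 : SimpleGraph (V 3) := (AQ 3).deleteEdges {e | e ∈ c3.edges}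

instance H3dec : DecidableRel H3.Adj := fun x y =>
  decidable_of_iff ((AQ 3).Adj x y ∧ s(x, y) ∉ c3.edges)
    (by rw [H3, SimpleGraph.deleteEdges_adj]; rfl)

def dec3 (i : Fin 8) : V 3 := g3 i.val

def adjN : Fin 8 → ℕ := ![28, 104, 97, 131, 193, 134, 22, 56]

def adjB (i j : Fin 8) : Bool := (adjN i).testBit j.val

set_option maxRecDepth 8000 in
lemma adjB_sound : ∀ i j : Fin 8, adjB i j = true → H3.Adj (dec3 i) (dec3 j) := by decide

lemma dec3_surj : Function.Surjective dec3 := by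
  intro x
  have : ∀ x : V 3, ∃ i, dec3 i = x := by decide
  exact this x

-- BFS over the index type
def bstep8 (pB : Fin 8 → Bool) (A : Finset (Fin 8)) : Finset (Fin 8) :=
  A ∪ Finset.univ.filter (fun w => pB w ∧ ∃ a ∈ A, adjB a w)

def bclos8 (pB : Fin 8 → Bool) (u : Fin 8) : Finset (Fin 8) := (bstep8 pB)^[8] {u}

lemma bfs8_sound (P : Set (V 3)) (pB : Fin 8 → Bool)
    (hp : ∀ i, pB i = true → dec3 i ∈ P) (u₀ : Fin 8) (h0 : pB u₀ = true) :
    ∀ w ∈ bclos8 pB u₀, ∃ hw : dec3 w ∈ P,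
      (H3.induce P).Reachable ⟨dec3 u₀, hp u₀ h0⟩ ⟨dec3 w, hw⟩ := by
  suffices h : ∀ k : ℕ, ∀ w ∈ (bstep8 pB)^[k] ({u₀} : Finset (Fin 8)), ∃ hw : dec3 w ∈ P,
      (H3.induce P).Reachable ⟨dec3 u₀, hp u₀ h0⟩ ⟨dec3 w, hw⟩ by
    exact h 8
  intro k
  induction k with
  | zero =>
    intro w hw
    simp only [Function.iterate_zero, id_eq, Finset.mem_singleton] at hw
    subst hw
    exact ⟨hp _ h0, Reachable.refl _⟩
  | succ k ih =>
    intro w hw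
    rw [Function.iterate_succ_apply', bstep8, Finset.mem_union] at hw
    rcases hw with hw | hw
    · exact ih w hw
    · rw [Finset.mem_filter] at hw
      obtain ⟨-, hpw, a, ha, hadj⟩ := hw
      obtain ⟨haP, hreach⟩ := ih a ha
      exact ⟨hp w hpw, hreach.trans (Adj.reachable (adjB_sound a w hadj))⟩

def pB3 (a b : V 3) (i : Fin 8) : Bool := !(dec3 i = a : Bool) && !(dec3 i = b : Bool)

set_option maxRecDepth 40000 in
set_option maxHeartbeats 2000000 in
lemma base_check : ∀ a b : V 3, ∃ u₀, pB3 a b u₀ = true ∧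
    ∀ w : Fin 8, pB3 a b w = true → w ∈ bclos8 (pB3 a b) u₀ := by decide

namespace Base
lemma pB3_iff (a b : V 3) (i : Fin 8) :
    pB3 a b i = true ↔ dec3 i ∈ ({a, b}ᶜ : Set (V 3)) := by
  simp [pB3, Set.mem_compl_iff]
  try tauto

lemma base_pair_conn : ∀ a b : V 3, (H3.induce ({a, b}ᶜ : Set (V 3))).Connected := by
  intro a b
  obtain ⟨u₀, h0, hall⟩ := base_check a b
  set P : Set (V 3) := ({a, b}ᶜ : Set (V 3)) with hP
  have hp : ∀ i, pB3 a b i = true → dec3 i ∈ P := fun i h => (pB3_iff a b i).mp h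
  rw [connected_iff]
  refine ⟨?_, ⟨⟨dec3 u₀, hp u₀ h0⟩⟩⟩
  intro z₁ z₂
  obtain ⟨i₁, hi₁⟩ := dec3_surj z₁.1
  obtain ⟨i₂, hi₂⟩ := dec3_surj z₂.1
  have m₁ : pB3 a b i₁ = true := (pB3_iff a b i₁).mpr (hi₁ ▸ z₁.2)
  have m₂ : pB3 a b i₂ = true := (pB3_iff a b i₂).mpr (hi₂ ▸ z₂.2)
  obtain ⟨hw₁, hr₁⟩ := bfs8_sound P (pB3 a b) hp u₀ h0 i₁ (hall i₁ m₁)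
  obtain ⟨hw₂, hr₂⟩ := bfs8_sound P (pB3 a b) hp u₀ h0 i₂ (hall i₂ m₂)
  have e₁ : (⟨dec3 i₁, hw₁⟩ : ↥P) = z₁ := Subtype.ext hi₁
  have e₂ : (⟨dec3 i₂, hw₂⟩ : ↥P) = z₂ := Subtype.ext hi₂
  rw [e₁] at hr₁; rw [e₂] at hr₂
  exact hr₁.symm.trans hr₂

lemma pair_conn_imp' : ∀ S : Set (V 3), S.ncard < 3 →
    ((H3).induce (Sᶜ : Set (V 3))).Connected := by
  apply pair_conn_imp H3
  · rw [card_V]; norm_num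
  · exact base_pair_conn
end Base

def HamGood (n : ℕ) : Prop :=
  ∃ (v : V n) (c : (AQ n).Walk v v), c.IsHamiltonianCycle ∧
    ∀ S : Set (V n), S.ncard < 2*n-3 →
      (((AQ n).deleteEdges {e | e ∈ c.edges}).induce (Sᶜ : Set (V n))).Connected

lemma ncard_le_one_mem {α : Type*} {s : Set α} (hs : s.ncard ≤ 1) {a : α} (ha : a ∈ s)
    (hfin : s.Finite) : ∀ b ∈ s, b = a := by
  intro b hb
  by_contra hne
  have hsub : ({b, a} : Set α) ⊆ s := by rintro z (rfl | rfl) <;> assumption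
  have := Set.ncard_le_ncard hsub hfin
  rw [Set.ncard_pair hne] at this
  omega

lemma two_mul_le_pow {n : ℕ} (h : 3 ≤ n) : 2*n ≤ 2^n := by
  induction n with
  | zero => omega
  | succ k ih =>
    rcases Nat.lt_or_ge k 3 with hk | hk
    · interval_cases k <;> simp_all <;> omega
    · have := ih (by omega)
      have h2 : (2:ℕ)^k ≥ 2 := by
        calc (2:ℕ) ≤ 2*k := by omega
        _ ≤ 2^k := this
      rw [pow_succ]
      omega



theorem step (m : ℕ) (hn : 2 ≤ m) (ih : HamGood (m+1)) : HamGood (m+2) := by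
  obtain ⟨v, c, hc, hconn⟩ := ih
  cases c with
  | nil => exact absurd rfl hc.isCycle.ne_nil
  | @cons _ b _ h p =>
    have hvb : v ≠ b := (AQ (m+1)).ne_of_adj h
    have hcyc := hc.isCycle
    rw [SimpleGraph.Walk.cons_isCycle_iff] at hcyc
    obtain ⟨hp_path, hsvb⟩ := hcyc
    have hcount : ∀ a, p.support.count a = 1 := by
      have ht := hc.isHamiltonian_tail
      rw [SimpleGraph.Walk.tail_cons] at ht
      intro a
      have := ht a
      simpa [SimpleGraph.Walk.support_copy] using this
    -- the doubled cycle
    set A : (AQ (m+2)).Walk (cns true v) (cns true b) := p.reverse.map (liftHom true) with hA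
    set B : (AQ (m+2)).Walk (cns false b) (cns false v) := p.map (liftHom false) with hB
    have eTop : (AQ (m+2)).Adj (cns false v) (cns true v) := adj_e0 (by decide) v
    have eMid : (AQ (m+2)).Adj (cns true b) (cns false b) := adj_e0 (by decide) b
    set Q : (AQ (m+2)).Walk (cns true v) (cns false v) :=
      A.append (SimpleGraph.Walk.cons eMid B) with hQ
    set c' : (AQ (m+2)).Walk (cns false v) (cns false v) := SimpleGraph.Walk.cons eTop Q
      with hc'
    have hQsup : Q.support =
        (p.support.reverse.map (cns true)) ++ (p.support.map (cns false)) := by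
      erw [hQ, SimpleGraph.Walk.support_append, SimpleGraph.Walk.support_cons, hA, hB,
        SimpleGraph.Walk.support_map, SimpleGraph.Walk.support_map,
        SimpleGraph.Walk.support_reverse]
      simp only [liftHom_coe, List.tail_cons]
    have hQedges : Q.edges = (p.reverse.edges.map (Sym2.map (cns true)))
        ++ (s(cns true b, cns false b) :: p.edges.map (Sym2.map (cns false))) := by
      erw [hQ, SimpleGraph.Walk.edges_append, SimpleGraph.Walk.edges_cons, hA, hB,
        SimpleGraph.Walk.edges_map, SimpleGraph.Walk.edges_map]
      simp only [liftHom_coe]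
    have hc'edges : c'.edges = s(cns false v, cns true v) :: Q.edges := rfl
    -- bit facts about lifted edge lists
    have bitsA : ∀ (β : Bool) (l : List (Sym2 (V (m+1)))) (z₁ z₂ : V (m+2)),
        s(z₁, z₂) ∈ l.map (Sym2.map (cns β)) → z₁ 0 = β ∧ z₂ 0 = β := by
      intro β l z₁ z₂ hmem
      rw [List.mem_map] at hmem
      obtain ⟨e, he, heq⟩ := hmem
      induction e using Sym2.ind with
      | _ x y =>
        rw [Sym2.map_pair_eq, Sym2.eq_iff] at heq
        rcases heq with ⟨h1, h2⟩ | ⟨h1, h2⟩ <;>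
          constructor <;> (first | rw [← h1] | rw [← h2]) <;> simp
    have memA : ∀ (β : Bool) (l : List (Sym2 (V (m+1)))) (x y : V (m+1)),
        s(cns β x, cns β y) ∈ l.map (Sym2.map (cns β)) → s(x, y) ∈ l := by
      intro β l x y hmem
      rw [List.mem_map] at hmem
      obtain ⟨e, he, heq⟩ := hmem
      induction e using Sym2.ind with
      | _ x' y' =>
        rw [Sym2.map_pair_eq, Sym2.eq_iff] at heq
        rcases heq with ⟨h1, h2⟩ | ⟨h1, h2⟩
        · rw [cns_inj _ h1, cns_inj _ h2] at he
          exact he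
        · rw [cns_inj _ h1, cns_inj _ h2] at he
          rwa [Sym2.eq_swap] at he
    have hnotin : ∀ (β : Bool) (x y : V (m+1)), s(x,y) ∉ p.edges →
        s(cns β x, cns β y) ∉ c'.edges := by
      intro β x y hxy hmem
      rw [hc'edges, List.mem_cons, hQedges, List.mem_append, List.mem_cons] at hmem
      rcases hmem with h1 | h2 | h3 | h4
      · rw [Sym2.eq_iff] at h1
        rcases h1 with ⟨e1, e2⟩ | ⟨e1, e2⟩
        · exact Bool.noConfusion ((cns_eq_bit e1).symm.trans (cns_eq_bit e2))
        · exact Bool.noConfusion ((cns_eq_bit e2).symm.trans (cns_eq_bit e1))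
      · cases β with
        | false =>
          have := (bitsA _ _ _ _ h2).1
          simp at this
        | true =>
          have := memA _ _ _ _ h2
          rw [SimpleGraph.Walk.edges_reverse, List.mem_reverse] at this
          exact hxy this
      · rw [Sym2.eq_iff] at h3
        rcases h3 with ⟨e1, e2⟩ | ⟨e1, e2⟩
        · exact Bool.noConfusion ((cns_eq_bit e1).symm.trans (cns_eq_bit e2))
        · exact Bool.noConfusion ((cns_eq_bit e2).symm.trans (cns_eq_bit e1))
      · cases β with
        | true =>
          have := (bitsA _ _ _ _ h4).1
          simp at this
        | false => exact hxy (memA _ _ _ _ h4)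
    set H' := (AQ (m+2)).deleteEdges {e | e ∈ c'.edges} with hH'
    have mkAdj : ∀ {z₁ z₂ : V (m+2)}, (AQ (m+2)).Adj z₁ z₂ → s(z₁,z₂) ∉ c'.edges →
        H'.Adj z₁ z₂ := by
      intro z₁ z₂ ha hne
      rw [hH', SimpleGraph.deleteEdges_adj]
      exact ⟨ha, hne⟩
    have hlift' : ∀ (β : Bool) {x y : V (m+1)}, (AQ (m+1)).Adj x y → s(x,y) ∉ p.edges →
        H'.Adj (cns β x) (cns β y) :=
      fun β _ _ hxy hne => mkAdj (adj_lift hxy) (hnotin _ _ _ hne)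
    have hcm1 : ∀ z : V (m+1), cmpl z ≠ z := fun z => cmpl_ne' z (by omega)
    have hcmplH : ∀ (β β' : Bool) (x : V (m+1)), β ≠ β' →
        H'.Adj (cns β x) (cns β' (cmpl x)) := by
      intro β β' x hbb
      refine mkAdj (adj_cmpl hbb x) ?_
      intro hmem
      rw [hc'edges, List.mem_cons, hQedges, List.mem_append, List.mem_cons] at hmem
      rcases hmem with h1 | h2 | h3 | h4
      · rw [Sym2.eq_iff] at h1
        rcases h1 with ⟨e1, e2⟩ | ⟨e1, e2⟩
        · exact hcm1 x ((cns_eq_tail e2).trans (cns_eq_tail e1).symm)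
        · exact hcm1 x ((cns_eq_tail e2).trans (cns_eq_tail e1).symm)
      · obtain ⟨u1, u2⟩ := bitsA _ _ _ _ h2
        rw [cns_zero] at u1 u2
        exact hbb (u1.trans u2.symm)
      · rw [Sym2.eq_iff] at h3
        rcases h3 with ⟨e1, e2⟩ | ⟨e1, e2⟩
        · exact hcm1 x ((cns_eq_tail e2).trans (cns_eq_tail e1).symm)
        · exact hcm1 x ((cns_eq_tail e2).trans (cns_eq_tail e1).symm)
      · obtain ⟨u1, u2⟩ := bitsA _ _ _ _ h4
        rw [cns_zero] at u1 u2
        exact hbb (u1.trans u2.symm)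
    have he0H : ∀ (β β' : Bool) (x : V (m+1)), β ≠ β' → x ≠ v → x ≠ b →
        H'.Adj (cns β x) (cns β' x) := by
      intro β β' x hbb hxv hxb
      refine mkAdj (adj_e0 hbb x) ?_
      intro hmem
      rw [hc'edges, List.mem_cons, hQedges, List.mem_append, List.mem_cons] at hmem
      rcases hmem with h1 | h2 | h3 | h4
      · rw [Sym2.eq_iff] at h1
        rcases h1 with ⟨e1, e2⟩ | ⟨e1, e2⟩ <;> exact hxv (cns_eq_tail e1)
      · obtain ⟨u1, u2⟩ := bitsA _ _ _ _ h2
        rw [cns_zero] at u1 u2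
        exact hbb (u1.trans u2.symm)
      · rw [Sym2.eq_iff] at h3
        rcases h3 with ⟨e1, e2⟩ | ⟨e1, e2⟩ <;> exact hxb (cns_eq_tail e1)
      · obtain ⟨u1, u2⟩ := bitsA _ _ _ _ h4
        rw [cns_zero] at u1 u2
        exact hbb (u1.trans u2.symm)
    -- Hamiltonicity
    have hQpath : Q.IsPath := by
      apply SimpleGraph.Walk.IsPath.mk'
      rw [hQsup, List.nodup_append]
      refine ⟨(List.nodup_reverse.mpr hp_path.support_nodup).map (cns_inj true),
        hp_path.support_nodup.map (cns_inj false), ?_⟩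
      intro a ha c0 hb hac
      subst hac
      rw [List.mem_map] at ha hb
      obtain ⟨x1, -, rfl⟩ := ha
      obtain ⟨x2, -, he⟩ := hb
      exact cns_ne false true (by decide) x2 x1 he
    have hQtop : s(cns false v, cns true v) ∉ Q.edges := by
      intro hmem
      rw [hQedges, List.mem_append, List.mem_cons] at hmem
      rcases hmem with h2 | h3 | h4
      · obtain ⟨u1, u2⟩ := bitsA _ _ _ _ h2
        rw [cns_zero] at u1
        exact Bool.noConfusion u1
      · rw [Sym2.eq_iff] at h3
        rcases h3 with ⟨e1, e2⟩ | ⟨e1, e2⟩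
        · exact Bool.noConfusion (cns_eq_bit e1)
        · exact hvb (cns_eq_tail e1)
      · obtain ⟨u1, u2⟩ := bitsA _ _ _ _ h4
        rw [cns_zero] at u2
        exact Bool.noConfusion u2
    have hc'cyc : c'.IsCycle := by
      rw [hc', SimpleGraph.Walk.cons_isCycle_iff]
      exact ⟨hQpath, hQtop⟩
    have hc'ham : c'.IsHamiltonianCycle := by
      rw [SimpleGraph.Walk.isHamiltonianCycle_iff_isCycle_and_support_count_tail_eq_one]
      refine ⟨hc'cyc, ?_⟩
      intro a
      have hsup : c'.support = cns false v :: Q.support := rfl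
      rw [hsup, List.tail_cons, hQsup, List.count_append]
      rcases Bool.dichotomy (a 0) with h0 | h0
      · have ha : a = cns false (Fin.tail a) := by rw [← h0]; exact eq_cns a
        rw [ha]
        have c1 : ((p.support.reverse.map (cns true)).count (cns false (Fin.tail a))) = 0 := by
          rw [List.count_eq_zero]
          intro hmem
          rw [List.mem_map] at hmem
          obtain ⟨x1, -, he⟩ := hmem
          exact cns_ne true false (by decide) x1 _ he
        have c2 : ((p.support.map (cns false)).count (cns false (Fin.tail a))) =
            p.support.count (Fin.tail a) := List.count_map_of_injective _ _ (cns_inj false) _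
        rw [c1, c2, hcount]
      · have ha : a = cns true (Fin.tail a) := by rw [← h0]; exact eq_cns a
        rw [ha]
        have c1 : ((p.support.map (cns false)).count (cns true (Fin.tail a))) = 0 := by
          rw [List.count_eq_zero]
          intro hmem
          rw [List.mem_map] at hmem
          obtain ⟨x1, -, he⟩ := hmem
          exact cns_ne false true (by decide) x1 _ he
        have c2 : ((p.support.reverse.map (cns true)).count (cns true (Fin.tail a))) =
            p.support.reverse.count (Fin.tail a) :=
          List.count_map_of_injective _ _ (cns_inj true) _
        rw [c1, c2, List.count_reverse, hcount]
    refine ⟨cns false v, c', hc'ham, ?_⟩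
    -- facts about H_n
    set Hn := (AQ (m+1)).deleteEdges {e | e ∈ (SimpleGraph.Walk.cons h p).edges} with hHn
    have hHnAdj : ∀ {x y : V (m+1)}, Hn.Adj x y → (AQ (m+1)).Adj x y ∧ s(x,y) ∉ p.edges := by
      intro x y hxy
      rw [hHn, SimpleGraph.deleteEdges_adj] at hxy
      obtain ⟨ha, hne⟩ := hxy
      refine ⟨ha, fun hmem => hne ?_⟩
      show s(x,y) ∈ (SimpleGraph.Walk.cons h p).edges
      rw [SimpleGraph.Walk.edges_cons]
      exact List.mem_cons_of_mem _ hmem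
    have hreg := regular_of_ham hc
    intro S hS
    rw [SimpleGraph.connected_iff]
    have hcardbig : S.ncard < Nat.card (V (m+2)) := by
      rw [card_V]
      have := two_mul_le_pow (n := m+2) (by omega)
      omega
    refine ⟨?_, ?_⟩
    swap
    · obtain ⟨z, hz⟩ := exists_not_mem S hcardbig
      exact ⟨⟨z, hz⟩⟩
    -- preconnected
    set I := H'.induce (Sᶜ : Set (V (m+2))) with hI
    have hS' : S.ncard ≤ 2*m := by omega
    have hmemI : ∀ (β : Bool) (x : V (m+1)), x ∉ cns β ⁻¹' S →
        cns β x ∈ (Sᶜ : Set (V (m+2))) := fun β x hx => hx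
    have adjReach : ∀ {z₁ z₂ : V (m+2)} (h₁ : z₁ ∈ (Sᶜ : Set (V (m+2))))
        (h₂ : z₂ ∈ (Sᶜ : Set (V (m+2)))), H'.Adj z₁ z₂ → I.Reachable ⟨z₁, h₁⟩ ⟨z₂, h₂⟩ :=
      fun h₁ h₂ ha => SimpleGraph.Adj.reachable ha
    have hdisj : Disjoint (cns false '' (cns false ⁻¹' S)) (cns true '' (cns true ⁻¹' S)) := by
      rw [Set.disjoint_left]
      rintro a ⟨x, -, rfl⟩ ⟨y, -, he⟩
      exact cns_ne true false (by decide) y x he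
    have hSdecomp : S = (cns false '' (cns false ⁻¹' S)) ∪ (cns true '' (cns true ⁻¹' S)) := by
      ext z
      constructor
      · intro hz
        rcases Bool.dichotomy (z 0) with h0 | h0
        · have e : cns false (Fin.tail z) = z := by rw [← h0]; exact (eq_cns z).symm
          exact Or.inl ⟨Fin.tail z, show cns false (Fin.tail z) ∈ S by rw [e]; exact hz, e⟩
        · have e : cns true (Fin.tail z) = z := by rw [← h0]; exact (eq_cns z).symm
          exact Or.inr ⟨Fin.tail z, show cns true (Fin.tail z) ∈ S by rw [e]; exact hz, e⟩
      · rintro (⟨x, hx, rfl⟩ | ⟨x, hx, rfl⟩) <;> exact hx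
    have hsum : (cns false ⁻¹' S).ncard + (cns true ⁻¹' S).ncard = S.ncard := by
      conv_rhs => rw [hSdecomp]
      rw [Set.ncard_union_eq hdisj (Set.toFinite _) (Set.toFinite _),
        Set.ncard_image_of_injective _ (cns_inj false),
        Set.ncard_image_of_injective _ (cns_inj true)]
    have htransfer : ∀ (β : Bool), (cns β ⁻¹' S).ncard < 2*(m+1)-3 →
        ∀ (x y : V (m+1)) (hx : x ∉ cns β ⁻¹' S) (hy : y ∉ cns β ⁻¹' S),
        I.Reachable ⟨cns β x, hmemI β x hx⟩ ⟨cns β y, hmemI β y hy⟩ := by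
      intro β hT x y hx hy
      have hcon := hconn _ hT
      have hpre := hcon.preconnected ⟨x, hx⟩ ⟨y, hy⟩
      let φ : (Hn.induce ((cns β ⁻¹' S)ᶜ : Set (V (m+1)))) →g I := {
        toFun := fun z => ⟨cns β z.1, hmemI β z.1 z.2⟩
        map_rel' := by
          intro z₁ z₂ hz
          obtain ⟨ha, hne⟩ := hHnAdj hz
          exact hlift' β ha hne }
      exact hpre.map φ
    have decomp : ∀ z : V (m+2), z ∉ S →
        ∃ (β : Bool) (x : V (m+1)) (hx : x ∉ cns β ⁻¹' S), z = cns β x := by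
      intro z hz
      refine ⟨z 0, Fin.tail z, ?_, eq_cns z⟩
      intro hmem
      apply hz
      rw [eq_cns z]
      exact hmem
    have escape : ∀ (β β' : Bool), β ≠ β' → ∀ (x : V (m+1)),
        (cns β' ⁻¹' S).ncard ≤ 1 →
        (cns β ⁻¹' S).ncard + (cns β' ⁻¹' S).ncard ≤ 2*m →
        ∀ (hx : x ∉ cns β ⁻¹' S),
        ∃ (y : V (m+1)) (hy : y ∉ cns β' ⁻¹' S),
          I.Reachable ⟨cns β x, hmemI β x hx⟩ ⟨cns β' y, hmemI β' y hy⟩ := by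
      intro β β' hbb x h1 hsum2 hx
      by_cases hcx : cmpl x ∈ cns β' ⁻¹' S
      · have hone : ∀ w ∈ cns β' ⁻¹' S, w = cmpl x :=
          ncard_le_one_mem h1 hcx (Set.toFinite _)
        have hTfb : (cns β ⁻¹' S).ncard ≤ 2*m - 1 := by
          have hpos : 0 < (cns β' ⁻¹' S).ncard := by
            rw [Set.ncard_pos (Set.toFinite _)]
            exact ⟨cmpl x, hcx⟩
          omega
        by_cases hxvb : x ≠ v ∧ x ≠ b
        · have hyS : x ∉ cns β' ⁻¹' S := by
            intro hmem
            exact hcm1 x (hone x hmem).symm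
          exact ⟨x, hyS, adjReach _ _ (he0H β β' x hbb hxvb.1 hxvb.2)⟩
        · push_neg at hxvb
          obtain ⟨w', hw'adj, hw'pe, hw'c⟩ : ∃ w', (AQ (m+1)).Adj x w' ∧
              s(x, w') ∉ p.edges ∧ s(x, w') ∈ (SimpleGraph.Walk.cons h p).edges := by
            by_cases hxv : x = v
            · subst hxv
              exact ⟨b, h, hsvb,
                by rw [SimpleGraph.Walk.edges_cons]; exact List.mem_cons_self⟩
            · have hxb := hxvb hxv
              subst hxb
              refine ⟨v, h.symm, ?_, ?_⟩
              · rw [Sym2.eq_swap]; exact hsvb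
              · rw [Sym2.eq_swap, SimpleGraph.Walk.edges_cons]
                exact List.mem_cons_self
          have hw'nn : w' ∉ Hn.neighborSet x := by
            intro hmem
            rw [SimpleGraph.mem_neighborSet, hHn, SimpleGraph.deleteEdges_adj] at hmem
            exact hmem.2 hw'c
          have hNcard : (insert w' (Hn.neighborSet x)).ncard = 2*m := by
            rw [Set.ncard_insert_of_notMem hw'nn (Set.toFinite _), hreg x]
            omega
          have hexy : ∃ y' ∈ insert w' (Hn.neighborSet x), y' ∉ cns β ⁻¹' S := by
            by_contra hno
            push_neg at hno
            have := Set.ncard_le_ncard hno (Set.toFinite _)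
            omega
          obtain ⟨y', hy'mem, hy'S⟩ := hexy
          have hy'adj : (AQ (m+1)).Adj x y' ∧ s(x, y') ∉ p.edges := by
            rcases hy'mem with rfl | hy'n
            · exact ⟨hw'adj, hw'pe⟩
            · rw [SimpleGraph.mem_neighborSet, hHn, SimpleGraph.deleteEdges_adj] at hy'n
              refine ⟨hy'n.1, fun hmem => hy'n.2 ?_⟩
              show s(x,y') ∈ (SimpleGraph.Walk.cons h p).edges
              rw [SimpleGraph.Walk.edges_cons]
              exact List.mem_cons_of_mem _ hmem
          have hcy' : cmpl y' ∉ cns β' ⁻¹' S := by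
            intro hmem
            exact (AQ (m+1)).ne_of_adj hy'adj.1 (cmpl_inj (hone _ hmem)).symm
          refine ⟨cmpl y', hcy', ?_⟩
          exact (adjReach (hmemI β x hx) (hmemI β y' hy'S)
              (hlift' β hy'adj.1 hy'adj.2)).trans
            (adjReach _ _ (hcmplH β β' y' hbb))
      · exact ⟨cmpl x, hcx, adjReach _ _ (hcmplH β β' x hbb)⟩
    by_cases hf : (cns false ⁻¹' S).ncard ≤ 2*(m+1)-4
    · by_cases ht : (cns true ⁻¹' S).ncard ≤ 2*(m+1)-4
      · -- both halves lightly damaged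
        have hBad : ((cns false ⁻¹' S) ∪ (cmpl '' (cns true ⁻¹' S))).ncard
            < Nat.card (V (m+1)) := by
          have h1 := Set.ncard_union_le (cns false ⁻¹' S) (cmpl '' (cns true ⁻¹' S))
          rw [Set.ncard_image_of_injective _ cmpl_inj] at h1
          rw [card_V]
          have := two_mul_le_pow (n := m+1) (by omega)
          omega
        obtain ⟨x₀, hx₀⟩ := exists_not_mem _ hBad
        have hx₀f : x₀ ∉ cns false ⁻¹' S := fun hmem => hx₀ (Or.inl hmem)
        have hx₀t : cmpl x₀ ∉ cns true ⁻¹' S := by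
          intro hmem
          exact hx₀ (Or.inr ⟨cmpl x₀, hmem, cmpl_cmpl x₀⟩)
        have toAnchor : ∀ z : ↥(Sᶜ : Set (V (m+2))),
            I.Reachable z ⟨cns true (cmpl x₀), hmemI true _ hx₀t⟩ := by
          intro z
          obtain ⟨β, x, hx, hzx⟩ := decomp z.1 z.2
          have hze : z = ⟨cns β x, hmemI β x hx⟩ := Subtype.ext hzx
          rw [hze]
          cases β with
          | false =>
            exact (htransfer false (by omega) x x₀ hx hx₀f).trans
              (adjReach _ _ (hcmplH false true x₀ (by decide)))
          | true =>
            exact htransfer true (by omega) x (cmpl x₀) hx hx₀t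
        exact fun z₁ z₂ => (toAnchor z₁).trans (toAnchor z₂).symm
      · -- true half heavily damaged
        have hf1 : (cns false ⁻¹' S).ncard ≤ 1 := by omega
        have toFalse : ∀ z : ↥(Sᶜ : Set (V (m+2))), ∃ (y : V (m+1))
            (hy : y ∉ cns false ⁻¹' S), I.Reachable z ⟨cns false y, hmemI false y hy⟩ := by
          intro z
          obtain ⟨β, x, hx, hzx⟩ := decomp z.1 z.2
          have hze : z = ⟨cns β x, hmemI β x hx⟩ := Subtype.ext hzx
          rw [hze]
          cases β with
          | false => exact ⟨x, hx, Reachable.refl _⟩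
          | true =>
            obtain ⟨y, hy, hr⟩ := escape true false (by decide) x hf1 (by omega) hx
            exact ⟨y, hy, hr⟩
        intro z₁ z₂
        obtain ⟨y₁, hy₁, r₁⟩ := toFalse z₁
        obtain ⟨y₂, hy₂, r₂⟩ := toFalse z₂
        exact r₁.trans ((htransfer false (by omega) y₁ y₂ hy₁ hy₂).trans r₂.symm)
    · -- false half heavily damaged
      have ht1 : (cns true ⁻¹' S).ncard ≤ 1 := by omega
      have toTrue : ∀ z : ↥(Sᶜ : Set (V (m+2))), ∃ (y : V (m+1))
          (hy : y ∉ cns true ⁻¹' S), I.Reachable z ⟨cns true y, hmemI true y hy⟩ := by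
        intro z
        obtain ⟨β, x, hx, hzx⟩ := decomp z.1 z.2
        have hze : z = ⟨cns β x, hmemI β x hx⟩ := Subtype.ext hzx
        rw [hze]
        cases β with
        | true => exact ⟨x, hx, Reachable.refl _⟩
        | false =>
          obtain ⟨y, hy, hr⟩ := escape false true (by decide) x ht1 (by omega) hx
          exact ⟨y, hy, hr⟩
      intro z₁ z₂
      obtain ⟨y₁, hy₁, r₁⟩ := toTrue z₁
      obtain ⟨y₂, hy₂, r₂⟩ := toTrue z₂
      exact r₁.trans ((htransfer true (by omega) y₁ y₂ hy₁ hy₂).trans r₂.symm)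

lemma hamGood3 : HamGood 3 := by
  refine ⟨v3, c3, c3_ham, ?_⟩
  intro S hS
  exact Base.pair_conn_imp' S (by omega)

lemma hamGood_all (n : ℕ) (hn : 3 ≤ n) : HamGood n := by
  induction n, hn using Nat.le_induction with
  | base => exact hamGood3
  | succ n hn ih =>
    obtain ⟨m, rfl⟩ : ∃ m, n = m + 1 := ⟨n - 1, by omega⟩
    exact step m (by omega) ih
end AQaux

theorem AQ_hamiltonian_complement (n : ℕ) (hn : 4 ≤ n) :
    ∃ (v : Fin n → Bool) (c : (AQ n).Walk v v), c.IsHamiltonianCycle ∧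
      (AQ n).deleteEdges {e | e ∈ c.edges} ≤ AQ n ∧
      IsKRegular ((AQ n).deleteEdges {e | e ∈ c.edges}) (2 * n - 3) ∧
        IsKConnected ((AQ n).deleteEdges {e | e ∈ c.edges}) (2 * n - 3) := by
  obtain ⟨m, rfl⟩ : ∃ m, n = m + 1 := ⟨n - 1, by omega⟩
  obtain ⟨v, c, hc, hconn⟩ := AQaux.hamGood_all (m+1) (by omega)
  refine ⟨v, c, hc, SimpleGraph.deleteEdges_le _, ?_, ?_, ?_⟩
  · intro u
    rw [AQaux.regular_of_ham hc u]
    omega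
  · rw [AQaux.card_V]
    have := AQaux.two_mul_le_pow (n := m + 1) (by omega)
    omega
  · intro S hS
    exact hconn S hS
end
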